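/- For any measurable h : Ω → [0,H], any z ∈ Ω and any t with 0 < t ≤ H·c_max·σ_max·v_d, the probability that |(A/m)·Σ_{j=1}^m c(z,Y_j;r)·h(Y_j) − ∫_Ω c(z,y;r)·h(y)·σ(y) dy| ≥ t is at most 2·exp(−C₂·(m·r^d/A)·(t/H)²). -/

import Mathlib

open Set Metric MeasureTheory
open Real ProbabilityTheory
open scoped ENNReal NNReal


lemma exp_quad {x : ℝ} (hx : |x| ≤ 1) : Real.exp x ≤ 1 + x + 3/4 * x^2 := by
  have h := Real.exp_bound hx (n := 2) (by norm_num)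
  have h2 : ∑ i ∈ Finset.range 2, x ^ i / (Nat.factorial i) = 1 + x := by
    simp [Finset.sum_range_succ]
  rw [h2] at h
  have := (abs_le.1 h).2
  have hb : |x| ^ 2 = x ^ 2 := sq_abs x
  have h3 : ((2:ℕ).succ : ℝ) / ((Nat.factorial 2 : ℕ) * 2) = 3/4 := by
    norm_num [Nat.factorial]
  nlinarith

lemma mgf_quad_bound {W : Type} [MeasurableSpace W] (P : Measure W) [IsProbabilityMeasure P]
    (X : W → ℝ) (hX : Measurable X) (b V u : ℝ)
    (hb : ∀ ω, |X ω| ≤ b) (hmean : ∫ ω, X ω ∂P = 0)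
    (hvar : ∫ ω, (X ω)^2 ∂P ≤ V) (hub : |u| * b ≤ 1) :
    mgf X P u ≤ Real.exp (3/4 * u^2 * V) := by
  have hXint : Integrable X P :=
    (integrable_const b).mono' hX.aestronglyMeasurable (ae_of_all _ hb)
  have hX2int : Integrable (fun ω => (X ω)^2) P := by
    refine (integrable_const (b^2)).mono' (hX.pow_const 2).aestronglyMeasurable
      (ae_of_all _ fun ω => ?_)
    have h1 := hb ω
    have h0 : (0:ℝ) ≤ |X ω| := abs_nonneg _
    rw [Real.norm_eq_abs, abs_pow, sq_abs, ← sq_abs]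
    nlinarith
  have hpt : ∀ ω, Real.exp (u * X ω) ≤ 1 + u * X ω + 3/4 * (u * X ω)^2 := by
    intro ω
    refine exp_quad ?_
    rw [abs_mul]
    calc |u| * |X ω| ≤ |u| * b := by
          exact mul_le_mul_of_nonneg_left (hb ω) (abs_nonneg u)
      _ ≤ 1 := hub
  have hexpint : Integrable (fun ω => Real.exp (u * X ω)) P := by
    refine (integrable_const (Real.exp (|u| * b))).mono'
      ((hX.const_mul u).exp).aestronglyMeasurable (ae_of_all _ fun ω => ?_)
    rw [Real.norm_eq_abs, abs_of_pos (Real.exp_pos _)]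
    refine Real.exp_le_exp.2 ?_
    calc u * X ω ≤ |u * X ω| := le_abs_self _
      _ = |u| * |X ω| := abs_mul _ _
      _ ≤ |u| * b := mul_le_mul_of_nonneg_left (hb ω) (abs_nonneg u)
  have hrhsint : Integrable (fun ω => 1 + u * X ω + 3/4 * (u * X ω)^2) P := by
    have : Integrable (fun ω => (u * X ω)^2) P := by
      simpa [mul_pow] using (hX2int.const_mul (u^2))
    exact ((integrable_const 1).add (hXint.const_mul u)).add (this.const_mul (3/4))
  have h1 : mgf X P u ≤ ∫ ω, (1 + u * X ω + 3/4 * (u * X ω)^2) ∂P :=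
    integral_mono hexpint hrhsint hpt
  have h2 : ∫ ω, (1 + u * X ω + 3/4 * (u * X ω)^2) ∂P
      = 1 + 3/4 * u^2 * ∫ ω, (X ω)^2 ∂P := by
    have e1 : ∀ ω, 1 + u * X ω + 3/4 * (u * X ω)^2
        = 1 + u * X ω + (3/4 * u^2) * (X ω)^2 := fun ω => by ring
    simp_rw [e1]
    have i1 : Integrable (fun ω => 1 + u * X ω) P := (integrable_const 1).add (hXint.const_mul u)
    have i2 : Integrable (fun ω => (3/4 * u^2) * (X ω)^2) P := hX2int.const_mul _
    have e2 : ∫ ω, (1 + u * X ω + (3/4 * u^2) * (X ω)^2) ∂P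
        = (∫ ω, (1 + u * X ω) ∂P) + ∫ ω, (3/4 * u^2) * (X ω)^2 ∂P := integral_add i1 i2
    have e3 : ∫ ω, (1 + u * X ω) ∂P = (∫ _ω, (1:ℝ) ∂P) + ∫ ω, u * X ω ∂P :=
      integral_add (integrable_const 1) (hXint.const_mul u)
    rw [e2, e3, integral_const, integral_const_mul, integral_const_mul, hmean]
    simp
  rw [h2] at h1
  calc mgf X P u ≤ 1 + 3/4 * u^2 * ∫ ω, (X ω)^2 ∂P := h1
    _ ≤ 1 + 3/4 * u^2 * V := by nlinarith [sq_nonneg u]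
    _ ≤ Real.exp (3/4 * u^2 * V) := by
        linarith [Real.add_one_le_exp (3/4 * u^2 * V)]

lemma integrable_exp_mul_of_abs_le {W : Type} [MeasurableSpace W] (P : Measure W)
    [IsProbabilityMeasure P] (X : W → ℝ) (hX : Measurable X) (b u : ℝ)
    (hb : ∀ ω, |X ω| ≤ b) : Integrable (fun ω => Real.exp (u * X ω)) P := by
  refine (integrable_const (Real.exp (|u| * b))).mono'
    ((hX.const_mul u).exp).aestronglyMeasurable (ae_of_all _ fun ω => ?_)
  rw [Real.norm_eq_abs, abs_of_pos (Real.exp_pos _)]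
  refine Real.exp_le_exp.2 ?_
  calc u * X ω ≤ |u * X ω| := le_abs_self _
    _ = |u| * |X ω| := abs_mul _ _
    _ ≤ |u| * b := mul_le_mul_of_nonneg_left (hb ω) (abs_nonneg u)

lemma bernstein_two_sided {W : Type} [MeasurableSpace W] (P : Measure W) [IsProbabilityMeasure P]
    (m : ℕ) (X : Fin m → W → ℝ) (hmeas : ∀ j, Measurable (X j))
    (hindep : iIndepFun X P)
    (b V : ℝ) (hVpos : 0 < V) (hbnn : 0 ≤ b)
    (hb : ∀ j ω, |X j ω| ≤ b) (hmean : ∀ j, ∫ ω, X j ω ∂P = 0)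
    (hvar : ∀ j, ∫ ω, (X j ω)^2 ∂P ≤ V)
    (t : ℝ) (ht : 0 < t) (htV : t * b ≤ V) :
    P {ω | (m:ℝ) * t ≤ (∑ j, X j) ω} + P {ω | (∑ j, X j) ω ≤ -((m:ℝ) * t)}
      ≤ ENNReal.ofReal (2 * Real.exp (-((m:ℝ) * t^2 / (3*V)))) := by
  set s : ℝ := 2*t/(3*V) with hs
  have hspos : 0 < s := by positivity
  have hsb : s * b ≤ 1 := by
    rw [hs, div_mul_eq_mul_div, div_le_one (by positivity)]
    nlinarith
  have hub : ∀ u : ℝ, u = s ∨ u = -s → |u| * b ≤ 1 := by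
    rintro u (rfl | rfl)
    · rwa [abs_of_pos hspos]
    · rwa [abs_neg, abs_of_pos hspos]
  have hmgf : ∀ (j : Fin m) (u : ℝ), |u| * b ≤ 1 →
      mgf (X j) P u ≤ Real.exp (3/4 * u^2 * V) := fun j u hu =>
    mgf_quad_bound P (X j) (hmeas j) b V u (hb j) (hmean j) (hvar j) hu
  have hint : ∀ (u : ℝ) (j : Fin m) , j ∈ Finset.univ →
      Integrable (fun ω => Real.exp (u * X j ω)) P := fun u j _ =>
    integrable_exp_mul_of_abs_le P (X j) (hmeas j) b u (hb j)
  have hprodbound : ∀ u : ℝ, |u| * b ≤ 1 → u^2 = s^2 →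
      Real.exp (-s * ((m:ℝ)*t)) * ∏ j, mgf (X j) P u
        ≤ Real.exp (-((m:ℝ) * t^2 / (3*V))) := by
    intro u hu hu2
    have h1 : ∏ j, mgf (X j) P u ≤ ∏ _j : Fin m, Real.exp (3/4 * u^2 * V) :=
      Finset.prod_le_prod (fun j _ => mgf_nonneg) (fun j _ => hmgf j u hu)
    have h2 : ∏ _j : Fin m, Real.exp (3/4 * u^2 * V)
        = Real.exp ((m:ℝ) * (3/4 * u^2 * V)) := by
      rw [Finset.prod_const, Finset.card_univ, Fintype.card_fin, ← Real.exp_nat_mul]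
    calc Real.exp (-s * ((m:ℝ)*t)) * ∏ j, mgf (X j) P u
        ≤ Real.exp (-s * ((m:ℝ)*t)) * Real.exp ((m:ℝ) * (3/4 * u^2 * V)) := by
          rw [← h2]
          exact mul_le_mul_of_nonneg_left h1 (Real.exp_pos _).le
      _ = Real.exp (-s * ((m:ℝ)*t) + (m:ℝ) * (3/4 * u^2 * V)) := (Real.exp_add _ _).symm
      _ = Real.exp (-((m:ℝ) * t^2 / (3*V))) := by
          congr 1
          rw [hu2, hs]
          field_simp
          ring
  have hmgfsum_s := hindep.mgf_sum hmeas (t := s) Finset.univ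
  have hmgfsum_ns := hindep.mgf_sum hmeas (t := -s) Finset.univ
  have hup : P {ω | (m:ℝ) * t ≤ (∑ j, X j) ω}
      ≤ ENNReal.ofReal (Real.exp (-((m:ℝ) * t^2 / (3*V)))) := by
    have chern := measure_ge_le_exp_mul_mgf (μ := P) (X := ∑ j, X j) ((m:ℝ)*t) hspos.le
      (hindep.integrable_exp_mul_sum hmeas (hint s))
    rw [hmgfsum_s] at chern
    have := le_trans chern (hprodbound s (hub s (Or.inl rfl)) rfl)
    rw [← ENNReal.ofReal_toReal (measure_ne_top P _)]
    exact ENNReal.ofReal_le_ofReal this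
  have hdown : P {ω | (∑ j, X j) ω ≤ -((m:ℝ) * t)}
      ≤ ENNReal.ofReal (Real.exp (-((m:ℝ) * t^2 / (3*V)))) := by
    have chern := measure_le_le_exp_mul_mgf (μ := P) (X := ∑ j, X j) (t := -s)
      (-((m:ℝ)*t)) (by linarith) (hindep.integrable_exp_mul_sum hmeas (hint (-s)))
    rw [hmgfsum_ns] at chern
    have heq : -(-s) * -((m:ℝ)*t) = -s * ((m:ℝ)*t) := by ring
    rw [heq] at chern
    have := le_trans chern (hprodbound (-s) (hub (-s) (Or.inr rfl)) (by ring))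
    rw [← ENNReal.ofReal_toReal (measure_ne_top P _)]
    exact ENNReal.ofReal_le_ofReal this
  calc P {ω | (m:ℝ) * t ≤ (∑ j, X j) ω} + P {ω | (∑ j, X j) ω ≤ -((m:ℝ) * t)}
      ≤ ENNReal.ofReal (Real.exp (-((m:ℝ) * t^2 / (3*V))))
        + ENNReal.ofReal (Real.exp (-((m:ℝ) * t^2 / (3*V)))) := add_le_add hup hdown
    _ = ENNReal.ofReal (2 * Real.exp (-((m:ℝ) * t^2 / (3*V)))) := by
        rw [← ENNReal.ofReal_add (Real.exp_pos _).le (Real.exp_pos _).le, two_mul]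

lemma stmt6_alg1 (A cmax H rd σmax vd : ℝ) (hA : A ≠ 0) (hrd : rd ≠ 0) :
    σmax / A * (A * (cmax / rd * H)) ^ 2 * (rd * vd)
      = (H * cmax * σmax * vd) * (A * (cmax / rd * H)) := by
  field_simp

lemma stmt6_alg2 (a mm s mu : ℝ) (hm : mm ≠ 0) :
    a * s - mm * mu = mm * (a / mm * s - mu) := by
  field_simp

lemma stmt6_alg3 (A cmax H rd σmax vd mm t : ℝ) (hA : A ≠ 0) (hrd : rd ≠ 0)
    (hσ : σmax ≠ 0) (hvd : vd ≠ 0) (hcm : cmax ≠ 0) (hH : H ≠ 0) :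
    -(mm * t^2 / (3 * (σmax / A * (A * (cmax / rd * H)) ^ 2 * (rd * vd))))
      = -(3 * cmax ^ 2 * σmax * vd)⁻¹ * (mm * rd / A) * (t / H) ^ 2 := by
  field_simp

set_option maxHeartbeats 2000000 in
/-- concentration of the empirical colonization pressure.  With
`Y₁,…,Y_m` i.i.d. points in `Ω` with density `A⁻¹σ`, for any measurable
`h : Ω → [0,H]`, `z ∈ Ω` and `0 < t ≤ H c_max σ_max v_d`,
`ℙ(|(A/m) Σ_j c(z,Y_j;r) h(Y_j) − ∫_Ω c(z,y;r) h(y) σ(y) dy| ≥ t)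
  ≤ 2 exp(−C₂ (m r^d/A)(t/H)²)`, where `C₂ = 1/(3 c_max² σ_max v_d)`. -/
theorem stmt6
    (d : ℕ) (hd : 1 ≤ d)
    (Ω : Set (EuclideanSpace ℝ (Fin d)))
    (hΩ_bdd : Bornology.IsBounded Ω) (hΩ_meas : MeasurableSet Ω)
    (σ : EuclideanSpace ℝ (Fin d) → ℝ) (σmax : ℝ)
    (hσ_meas : Measurable σ) (hσ_bnd : ∀ y ∈ Ω, σ y ∈ Icc 0 σmax)
    (A : ℝ) (hA : A = ∫ y in Ω, σ y) (hA_pos : 0 < A)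
    (r : ℝ) (hr : 0 < r)
    (cz : EuclideanSpace ℝ (Fin d) → ℝ → ℝ) (cmax : ℝ)
    (hcz_bnd : ∀ z ∈ Ω, ∀ x : ℝ, 0 ≤ x → cz z x ∈ Icc 0 cmax)
    (hcz_zero : ∀ z ∈ Ω, ∀ x : ℝ, 1 < x → cz z x = 0)
    (hcz_meas : ∀ z ∈ Ω, Measurable (cz z))
    (c : EuclideanSpace ℝ (Fin d) → EuclideanSpace ℝ (Fin d) → ℝ)
    (hc : ∀ z y, c z y = cz z (dist z y / r) / r ^ d)
    (vd C₂ : ℝ)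
    (hvd : vd = (volume (ball (0 : EuclideanSpace ℝ (Fin d)) 1)).toReal)
    (hC₂ : C₂ = (3 * cmax ^ 2 * σmax * vd)⁻¹)
    (W : Type) [MeasurableSpace W] (P : Measure W) [IsProbabilityMeasure P]
    (m : ℕ) (hm : 1 ≤ m)
    (Y : Fin m → W → EuclideanSpace ℝ (Fin d))
    (hY_meas : ∀ j, Measurable (Y j))
    (hY_indep : ProbabilityTheory.iIndepFun Y P)
    (hY_law : ∀ j, Measure.map (Y j) P =
      (volume.restrict Ω).withDensity (fun y => ENNReal.ofReal (σ y / A)))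
    (h : EuclideanSpace ℝ (Fin d) → ℝ) (H : ℝ) (hH : 0 < H)
    (hh_meas : Measurable h) (hh_bnd : ∀ y ∈ Ω, h y ∈ Icc 0 H)
    (z : EuclideanSpace ℝ (Fin d)) (hz : z ∈ Ω)
    (t : ℝ) (ht : 0 < t) (ht2 : t ≤ H * cmax * σmax * vd) :
    P {ω | t ≤ |(A / m) * ∑ j : Fin m, c z (Y j ω) * h (Y j ω)
              - ∫ y in Ω, c z y * h y * σ y|}
      ≤ ENNReal.ofReal (2 * Real.exp (-C₂ * ((m : ℝ) * r ^ d / A) * (t / H) ^ 2)) := by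
  -- positivity facts
  have hrd : (0:ℝ) < r ^ d := pow_pos hr d
  have hσmax : 0 < σmax := by
    by_contra hcon
    push_neg at hcon
    have hzero : ∀ y ∈ Ω, σ y = 0 := fun y hy =>
      le_antisymm (le_trans (hσ_bnd y hy).2 hcon) (hσ_bnd y hy).1
    have : A = 0 := by
      rw [hA, setIntegral_congr_fun hΩ_meas (g := fun _ => (0:ℝ)) hzero]
      simp
    linarith
  have hvd_pos : 0 < vd := by
    rw [hvd]
    exact ENNReal.toReal_pos (measure_ball_pos volume 0 one_pos).ne' measure_ball_lt_top.ne
  have hcmax : 0 < cmax := by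
    by_contra hcon
    push_neg at hcon
    have h1 : cmax * (H * σmax * vd) ≤ 0 :=
      mul_nonpos_of_nonpos_of_nonneg hcon (by positivity)
    nlinarith
  -- basic measurability / bounds for the kernel
  have hczy_meas : Measurable (fun y => c z y) := by
    simp_rw [hc]
    exact ((hcz_meas z hz).comp
      ((Continuous.dist continuous_const continuous_id).measurable.div_const r)).div_const _
  have hc_bnd : ∀ y, c z y ∈ Icc 0 (cmax / r ^ d) := by
    intro y
    rw [hc]
    have hx : (0:ℝ) ≤ dist z y / r := div_nonneg dist_nonneg hr.le
    have := hcz_bnd z hz _ hx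
    exact ⟨div_nonneg this.1 hrd.le, (div_le_div_iff_of_pos_right hrd).2 this.2⟩
  have hc_zero : ∀ y, r < dist z y → c z y = 0 := by
    intro y hy
    rw [hc, hcz_zero z hz _ ((one_lt_div hr).2 hy), zero_div]
  -- the bounded integrand
  set μ₀ : ℝ := ∫ y in Ω, c z y * h y * σ y with hμ₀
  set g : EuclideanSpace ℝ (Fin d) → ℝ := fun y => A * (c z y * h y) with hgdef
  set φ : EuclideanSpace ℝ (Fin d) → ℝ := Ω.indicator g with hφdef
  set b : ℝ := A * (cmax / r ^ d * H) with hbdef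
  set V : ℝ := σmax / A * b ^ 2 * (r ^ d * vd) with hVdef
  have hbpos : 0 < b := by positivity
  have hVpos : 0 < V := by positivity
  have hg_meas : Measurable g := (hczy_meas.mul hh_meas).const_mul A
  have hφ_meas : Measurable φ := hg_meas.indicator hΩ_meas
  have hφ_bnd : ∀ y, 0 ≤ φ y ∧ φ y ≤ b := by
    intro y
    rw [hφdef]
    by_cases hy : y ∈ Ω
    · rw [Set.indicator_of_mem hy, hgdef]
      have h1 := hc_bnd y
      have h2 := hh_bnd y hy
      constructor
      · exact mul_nonneg hA_pos.le (mul_nonneg h1.1 h2.1)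
      · rw [hbdef]
        exact mul_le_mul_of_nonneg_left
          (mul_le_mul h1.2 h2.2 h2.1 (by positivity)) hA_pos.le
    · rw [Set.indicator_of_notMem hy]
      exact ⟨le_refl 0, hbpos.le⟩
  have hφ_supp : ∀ y, y ∉ closedBall z r → φ y = 0 := by
    intro y hy
    have hdist : r < dist z y := by
      rw [mem_closedBall, dist_comm] at hy
      exact lt_of_not_ge hy
    have hgy : g y = 0 := by rw [hgdef]; simp [hc_zero y hdist]
    by_cases hyΩ : y ∈ Ω
    · simp [hφdef, Set.indicator_of_mem hyΩ, hgy]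
    · simp [hφdef, Set.indicator_of_notMem hyΩ]
  -- transfer of integrals to the law
  have key : ∀ ψ : EuclideanSpace ℝ (Fin d) → ℝ, Measurable ψ → ∀ j : Fin m,
      ∫ ω, ψ (Y j ω) ∂P = ∫ y in Ω, (σ y / A) * ψ y := by
    intro ψ hψ j
    rw [← integral_map (hY_meas j).aemeasurable hψ.aestronglyMeasurable, hY_law j]
    have hdens : (fun y => ENNReal.ofReal (σ y / A))
        = fun y => (((σ y / A).toNNReal : ℝ≥0) : ℝ≥0∞) := rfl
    rw [hdens, integral_withDensity_eq_integral_smul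
      ((hσ_meas.div_const A).real_toNNReal) ψ]
    refine setIntegral_congr_fun hΩ_meas (fun y hy => ?_)
    have hnn : 0 ≤ σ y / A := div_nonneg (hσ_bnd y hy).1 hA_pos.le
    simp [NNReal.smul_def, Real.coe_toNNReal _ hnn]
  -- first moment
  have hEφ : ∀ j : Fin m, ∫ ω, φ (Y j ω) ∂P = μ₀ := by
    intro j
    rw [key φ hφ_meas j, hμ₀]
    refine setIntegral_congr_fun hΩ_meas (fun y hy => ?_)
    rw [hφdef, Set.indicator_of_mem hy, hgdef]
    field_simp
  -- second moment
  have hEφ2 : ∀ j : Fin m, ∫ ω, (φ (Y j ω))^2 ∂P ≤ V := by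
    intro j
    rw [key (fun y => (φ y)^2) (hφ_meas.pow_const 2) j]
    set K : Set (EuclideanSpace ℝ (Fin d)) := Ω ∩ closedBall z r with hKdef
    have hK_meas : MeasurableSet K := hΩ_meas.inter measurableSet_closedBall
    set B : EuclideanSpace ℝ (Fin d) → ℝ := K.indicator (fun _ => σmax / A * b^2)
      with hBdef
    have hBnn : ∀ y, 0 ≤ B y := by
      intro y
      rw [hBdef]
      exact Set.indicator_nonneg (fun _ _ => by positivity) y
    have hpt : ∀ y, y ∈ Ω → (σ y / A) * (φ y)^2 ≤ B y := by
      intro y hy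
      by_cases hyB : y ∈ closedBall z r
      · have hKy : y ∈ K := ⟨hy, hyB⟩
        rw [hBdef, Set.indicator_of_mem hKy]
        have h1 := hφ_bnd y
        have h2 := hσ_bnd y hy
        have h3 : (φ y)^2 ≤ b^2 := by nlinarith
        have h4 : σ y / A ≤ σmax / A := (div_le_div_iff_of_pos_right hA_pos).2 h2.2
        have h5 : 0 ≤ σ y / A := div_nonneg h2.1 hA_pos.le
        nlinarith
      · rw [hφ_supp y hyB]
        simpa using hBnn y
    have hptnn : ∀ y, 0 ≤ (σ y / A) * (φ y)^2 := by
      intro y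
      by_cases hy : y ∈ Ω
      · exact mul_nonneg (div_nonneg (hσ_bnd y hy).1 hA_pos.le) (sq_nonneg _)
      · rw [hφdef, Set.indicator_of_notMem hy]
        simp
    have hBint : Integrable B volume := by
      rw [hBdef, integrable_indicator_iff hK_meas]
      refine integrableOn_const (ne_of_lt ?_)
      exact lt_of_le_of_lt (measure_mono Set.inter_subset_right) measure_closedBall_lt_top
    have hBint' : Integrable B (volume.restrict Ω) := hBint.restrict
    have hLHSint : Integrable (fun y => (σ y / A) * (φ y)^2) (volume.restrict Ω) := by
      refine hBint'.mono' ?_ ?_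
      · exact ((hσ_meas.div_const A).mul (hφ_meas.pow_const 2)).aestronglyMeasurable
      · refine (ae_restrict_iff' hΩ_meas).2 (ae_of_all _ fun y hy => ?_)
        rw [Real.norm_eq_abs, abs_of_nonneg (hptnn y)]
        exact hpt y hy
    have step1 : ∫ y in Ω, (σ y / A) * (φ y)^2 ≤ ∫ y in Ω, B y :=
      integral_mono_ae hLHSint hBint'
        ((ae_restrict_iff' hΩ_meas).2 (ae_of_all _ hpt))
    have step2 : ∫ y in Ω, B y ≤ ∫ y, B y :=
      setIntegral_le_integral hBint (ae_of_all _ hBnn)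
    have step3 : ∫ y, B y = σmax / A * b^2 * (volume K).toReal := by
      rw [hBdef, integral_indicator hK_meas, setIntegral_const, smul_eq_mul, mul_comm]
      rfl
    have hvolK : (volume K).toReal ≤ r ^ d * vd := by
      have h1 : volume K ≤ volume (closedBall z r) :=
        measure_mono Set.inter_subset_right
      have h2 : volume (closedBall z r)
          = ENNReal.ofReal (r ^ d) * volume (ball (0 : EuclideanSpace ℝ (Fin d)) 1) := by
        rw [Measure.addHaar_closedBall volume z hr.le, finrank_euclideanSpace_fin]
      have h3 : (volume (closedBall z r)).toReal = r ^ d * vd := by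
        rw [h2, ENNReal.toReal_mul, ENNReal.toReal_ofReal hrd.le, hvd]
      have hne : volume (closedBall z r) ≠ ⊤ := measure_closedBall_lt_top.ne
      exact le_trans (ENNReal.toReal_mono hne h1) h3.le
    calc ∫ y in Ω, (σ y / A) * (φ y)^2 ≤ σmax / A * b^2 * (volume K).toReal := by
          rw [← step3]; exact le_trans step1 step2
      _ ≤ σmax / A * b^2 * (r ^ d * vd) := by
          refine mul_le_mul_of_nonneg_left hvolK (by positivity)
      _ = V := hVdef.symm
  -- integrability of φ ∘ Y j
  have hφYint : ∀ j : Fin m, Integrable (fun ω => φ (Y j ω)) P := by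
    intro j
    refine (integrable_const b).mono'
      ((hφ_meas.comp (hY_meas j)).aestronglyMeasurable) (ae_of_all _ fun ω => ?_)
    rw [Real.norm_eq_abs, abs_of_nonneg (hφ_bnd _).1]
    exact (hφ_bnd _).2
  have hφY2int : ∀ j : Fin m, Integrable (fun ω => (φ (Y j ω))^2) P := by
    intro j
    refine (integrable_const (b^2)).mono'
      (((hφ_meas.comp (hY_meas j)).pow_const 2).aestronglyMeasurable)
      (ae_of_all _ fun ω => ?_)
    have h1 := hφ_bnd (Y j ω)
    rw [Real.norm_eq_abs, abs_of_nonneg (sq_nonneg _)]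
    nlinarith
  -- bounds on μ₀
  have j0 : Fin m := ⟨0, hm⟩
  have hμ₀nn : 0 ≤ μ₀ := by
    rw [← hEφ j0]
    exact integral_nonneg (fun ω => (hφ_bnd _).1)
  have hμ₀b : μ₀ ≤ b := by
    rw [← hEφ j0]
    calc ∫ ω, φ (Y j0 ω) ∂P ≤ ∫ _ω, b ∂P :=
          integral_mono (hφYint j0) (integrable_const b) (fun ω => (hφ_bnd _).2)
      _ = b := by simp
  -- the centered variables
  set X : Fin m → W → ℝ := fun j ω => φ (Y j ω) - μ₀ with hXdef
  have hX_meas : ∀ j, Measurable (X j) :=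
    fun j => (hφ_meas.comp (hY_meas j)).sub measurable_const
  have hX_indep : iIndepFun X P :=
    hY_indep.comp (fun _ v => φ v - μ₀) (fun _ => hφ_meas.sub measurable_const)
  have hXb : ∀ j ω, |X j ω| ≤ b := by
    intro j ω
    have h1 := hφ_bnd (Y j ω)
    rw [hXdef, abs_le]
    constructor <;> simp only [] <;> [linarith; linarith]
  have hXmean : ∀ j, ∫ ω, X j ω ∂P = 0 := by
    intro j
    rw [hXdef]
    simp only []
    rw [integral_sub (hφYint j) (integrable_const μ₀), hEφ j, integral_const]
    simp
  have hXvar : ∀ j, ∫ ω, (X j ω)^2 ∂P ≤ V := by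
    intro j
    have he : ∀ ω, (X j ω)^2 = (φ (Y j ω))^2 - (2*μ₀) * φ (Y j ω) + μ₀^2 := by
      intro ω; rw [hXdef]; ring
    simp_rw [he]
    have i1 : ∫ ω, ((φ (Y j ω))^2 - (2*μ₀) * φ (Y j ω) + μ₀^2) ∂P
        = (∫ ω, ((φ (Y j ω))^2 - (2*μ₀) * φ (Y j ω)) ∂P) + ∫ _ω, μ₀^2 ∂P :=
      integral_add ((hφY2int j).sub ((hφYint j).const_mul (2*μ₀)))
        (integrable_const (μ₀^2))
    have i2 : ∫ ω, ((φ (Y j ω))^2 - (2*μ₀) * φ (Y j ω)) ∂P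
        = (∫ ω, (φ (Y j ω))^2 ∂P) - ∫ ω, (2*μ₀) * φ (Y j ω) ∂P :=
      integral_sub (hφY2int j) ((hφYint j).const_mul (2*μ₀))
    rw [i1, i2, integral_const_mul, hEφ j, integral_const]
    have := hEφ2 j
    simp only [probReal_univ, measure_univ, ENNReal.toReal_one, smul_eq_mul, one_mul]
    linarith [sq_nonneg μ₀]
  clear_value X V b φ g μ₀
  -- Bernstein bound applies
  have hVb : V = (H * cmax * σmax * vd) * b := by
    rw [hVdef, hbdef]
    exact stmt6_alg1 A cmax H (r^d) σmax vd hA_pos.ne' hrd.ne'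
  have htb : t * b ≤ V := by
    rw [hVb]
    exact mul_le_mul_of_nonneg_right ht2 hbpos.le
  have hbern := bernstein_two_sided P m X hX_meas hX_indep b V hVpos hbpos.le
    hXb hXmean hXvar t ht htb
  -- almost surely all samples lie in Ω
  have hje : ∀ j : Fin m, P (Y j ⁻¹' Ωᶜ) = 0 := by
    intro j
    rw [← Measure.map_apply (hY_meas j) hΩ_meas.compl, hY_law j,
      withDensity_apply _ hΩ_meas.compl, Measure.restrict_restrict hΩ_meas.compl]
    simp [Set.compl_inter_self]
  have hGc : P ({ω | ∀ j, Y j ω ∈ Ω}ᶜ) = 0 := by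
    have hGeq : ({ω | ∀ j, Y j ω ∈ Ω}ᶜ : Set W) = ⋃ j, Y j ⁻¹' Ωᶜ := by
      ext ω
      simp only [Set.mem_compl_iff, Set.mem_setOf_eq, not_forall, Set.mem_iUnion,
        Set.mem_preimage]
    rw [hGeq]
    exact measure_iUnion_null fun j => hje j
  have hmR : (0:ℝ) < (m:ℝ) := Nat.cast_pos.mpr hm
  -- event inclusion
  have hsub : {ω | t ≤ |A / (m:ℝ) * ∑ j : Fin m, c z (Y j ω) * h (Y j ω) - μ₀|}
      ⊆ ({ω | (m:ℝ)*t ≤ (∑ j, X j) ω} ∪ {ω | (∑ j, X j) ω ≤ -((m:ℝ)*t)})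
        ∪ {ω | ∀ j, Y j ω ∈ Ω}ᶜ := by
    intro ω hω
    by_cases hωG : ∀ j, Y j ω ∈ Ω
    · left
      have hT : (∑ j, X j) ω
          = (m:ℝ) * (A / (m:ℝ) * ∑ j : Fin m, c z (Y j ω) * h (Y j ω) - μ₀) := by
        rw [Finset.sum_apply]
        have he : ∀ j ∈ Finset.univ, X j ω = A * (c z (Y j ω) * h (Y j ω)) - μ₀ := by
          intro j _
          rw [hXdef]
          simp only []
          rw [hφdef, Set.indicator_of_mem (hωG j), hgdef]
        rw [Finset.sum_congr rfl he, Finset.sum_sub_distrib, Finset.sum_const,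
          Finset.card_univ, Fintype.card_fin, ← Finset.mul_sum, nsmul_eq_mul]
        exact stmt6_alg2 A (m:ℝ) _ μ₀ hmR.ne'
      have hω' : t ≤ |A / (m:ℝ) * ∑ j : Fin m, c z (Y j ω) * h (Y j ω) - μ₀| := hω
      rcases abs_cases (A / (m:ℝ) * ∑ j : Fin m, c z (Y j ω) * h (Y j ω) - μ₀) with
        ⟨he, _⟩ | ⟨he, _⟩
      · left
        show (m:ℝ)*t ≤ (∑ j, X j) ω
        rw [hT]
        rw [he] at hω'
        exact mul_le_mul_of_nonneg_left hω' hmR.le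
      · right
        show (∑ j, X j) ω ≤ -((m:ℝ)*t)
        rw [hT]
        rw [he] at hω'
        have h2 := mul_le_mul_of_nonneg_left hω' hmR.le
        rw [mul_neg] at h2
        linarith
    · right
      exact hωG
  calc P {ω | t ≤ |A / (m:ℝ) * ∑ j : Fin m, c z (Y j ω) * h (Y j ω) - μ₀|}
      ≤ P (({ω | (m:ℝ)*t ≤ (∑ j, X j) ω} ∪ {ω | (∑ j, X j) ω ≤ -((m:ℝ)*t)})
        ∪ {ω | ∀ j, Y j ω ∈ Ω}ᶜ) := measure_mono hsub
    _ ≤ P ({ω | (m:ℝ)*t ≤ (∑ j, X j) ω} ∪ {ω | (∑ j, X j) ω ≤ -((m:ℝ)*t)})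
        + P ({ω | ∀ j, Y j ω ∈ Ω}ᶜ) := measure_union_le _ _
    _ = P ({ω | (m:ℝ)*t ≤ (∑ j, X j) ω} ∪ {ω | (∑ j, X j) ω ≤ -((m:ℝ)*t)}) := by
        rw [hGc, add_zero]
    _ ≤ P {ω | (m:ℝ)*t ≤ (∑ j, X j) ω} + P {ω | (∑ j, X j) ω ≤ -((m:ℝ)*t)} :=
        measure_union_le _ _
    _ ≤ ENNReal.ofReal (2 * Real.exp (-((m:ℝ) * t^2 / (3*V)))) := hbern
    _ = ENNReal.ofReal (2 * Real.exp (-C₂ * ((m : ℝ) * r ^ d / A) * (t / H) ^ 2)) := by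
        congr 2
        rw [hC₂, hVdef, hbdef]
        exact congrArg Real.exp (stmt6_alg3 A cmax H (r^d) σmax vd (m:ℝ) t
          hA_pos.ne' hrd.ne' hσmax.ne' hvd_pos.ne' hcmax.ne' hH.ne')
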